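/- Let β ∈ (1,2). There exists p₀ ∈ (0, 1/β) such that for every p ∈ (0, p₀) the integral J(p) = ∫_ℝ (|1 − |t|^{−β}|^p − 1) dt converges absolutely and J(p) < 0. -/

import Mathlib

open MeasureTheory Set Real Filter Topology

lemma exp_le_quad (w : ℝ) : Real.exp w ≤ 1 + w + w^2 * (1 + Real.exp w) := by
  rcases le_or_gt w 0 with hw | hw
  · -- exp w ≤ 1 + w + w^2
    have h2 : 1 - w ≤ Real.exp (-w) := by
      have := Real.add_one_le_exp (-w); linarith
    have h3 : (0:ℝ) < 1 + w + w^2 := by nlinarith [sq_nonneg w, sq_nonneg (w+1)]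
    have h4 : 1 ≤ (1 + w + w^2) * Real.exp (-w) := by
      have h1 : (1 + w + w^2) * (1 - w) = 1 - w^3 := by ring
      have h6 : (0:ℝ) ≤ -w^3 := by
        have : (0:ℝ) ≤ (-w)^3 := pow_nonneg (by linarith) 3
        nlinarith
      nlinarith [mul_le_mul_of_nonneg_left h2 h3.le]
    have h5 : Real.exp w ≤ 1 + w + w^2 := by
      rw [Real.exp_neg] at h4
      have hp := Real.exp_pos w
      calc Real.exp w = Real.exp w * 1 := by ring
        _ ≤ Real.exp w * ((1 + w + w^2) * (Real.exp w)⁻¹) := by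
            exact mul_le_mul_of_nonneg_left h4 hp.le
        _ = 1 + w + w^2 := by field_simp
    nlinarith [Real.exp_pos w, sq_nonneg w]
  · have h2 : Real.exp w - 1 ≤ w * Real.exp w := by
      have h0 := Real.add_one_le_exp (-w)
      have hp := Real.exp_pos w
      have h1 : (-w + 1) * Real.exp w ≤ Real.exp (-w) * Real.exp w :=
        mul_le_mul_of_nonneg_right h0 hp.le
      rw [← Real.exp_add] at h1
      simp at h1
      nlinarith
    have h3 : Real.exp w - 1 - w ≤ w * (Real.exp w - 1) := by nlinarith
    have h4 : w * (Real.exp w - 1) ≤ w * (w * Real.exp w) :=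
      mul_le_mul_of_nonneg_left h2 hw.le
    nlinarith [Real.exp_pos w, sq_nonneg w]

lemma neg_log_le_rpow {u : ℝ} (hu : 0 < u) : -Real.log u ≤ 8 * u ^ (-(8:ℝ)⁻¹) := by
  have h := Real.log_le_rpow_div (inv_nonneg.mpr hu.le) (by norm_num : (0:ℝ) < 8⁻¹)
  rw [Real.log_inv] at h
  rw [Real.inv_rpow hu.le, ← Real.rpow_neg hu.le] at h
  calc -Real.log u ≤ u ^ (-(8:ℝ)⁻¹) / 8⁻¹ := h
    _ = 8 * u ^ (-(8:ℝ)⁻¹) := by ring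

lemma meas_rpow_comp {f : ℝ → ℝ} (hf : Measurable f) (h0 : ∀ x, 0 ≤ f x) {c : ℝ}
    (hc : c ≠ 0) : Measurable fun x => f x ^ c := by
  have : (fun x => f x ^ c) = fun x =>
      if f x = 0 then 0 else Real.exp (Real.log (f x) * c) := by
    funext x
    by_cases h : f x = 0
    · simp [h, Real.zero_rpow hc]
    · rw [if_neg h, Real.rpow_def_of_pos (lt_of_le_of_ne (h0 x) (Ne.symm h))]
  rw [this]
  exact Measurable.ite (hf (measurableSet_singleton 0)) measurable_const
    (((Real.measurable_log.comp hf).mul_const c).exp)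

lemma meas_absrpow {c : ℝ} (hc : c ≠ 0) : Measurable fun t : ℝ => |t| ^ c :=
  meas_rpow_comp measurable_abs (fun _ => abs_nonneg _) hc

lemma integrable_of_even_pos {f : ℝ → ℝ} (hm : AEStronglyMeasurable f volume)
    (heven : ∀ x, f (-x) = f x) (hf : IntegrableOn f (Set.Ioi 0)) : Integrable f := by
  have m : MeasurableEmbedding fun x : ℝ => -x := (Homeomorph.neg ℝ).measurableEmbedding
  have hIic : IntegrableOn f (Iic 0) := by
    rw [← Measure.map_neg_eq_self (volume : Measure ℝ)]
    rw [m.integrableOn_map_iff]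
    have : f ∘ (fun x : ℝ => -x) = f := by funext x; exact heven x
    rw [this]
    have : (fun x : ℝ => -x) ⁻¹' Iic 0 = Ici 0 := by
      ext x; simp [neg_le]
    rw [this]
    exact (integrableOn_Ici_iff_integrableOn_Ioi).mpr hf
  have h := hIic.union hf
  rw [Iic_union_Ioi] at h
  rwa [← integrableOn_univ]

lemma bound1 {β t : ℝ} (hβ1 : 1 < β) (hβ2 : β ≤ 2) (ht0 : 0 < t) (ht : t ≤ 1/2) :
    |Real.log (abs (1 - t ^ (-β)))| + (Real.log (abs (1 - t ^ (-β))))^2 * (2 + (abs (1 - t ^ (-β))) ^ (2*β)⁻¹)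
      ≤ 784 * t ^ (-(3/4) : ℝ) := by
  have ht1 : t ≤ 1 := by linarith
  set e := t ^ (-(8:ℝ)⁻¹) with he_def
  have hpow : ∀ n : ℕ, e ^ n = t ^ ((-(8:ℝ)⁻¹) * n) := by
    intro n
    rw [← Real.rpow_natCast e n, ← Real.rpow_mul ht0.le]
  have he1 : 1 ≤ e := Real.one_le_rpow_of_pos_of_le_one_of_nonpos ht0 ht1 (by norm_num)
  -- x = t^(-β) ≥ 2
  have hx2 : (2:ℝ) ≤ t ^ (-β) := by
    have h1 : ((1:ℝ)/2) ^ (-β) ≤ t ^ (-β) := by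
      have := antitoneOn_rpow_Ioi_of_exponent_nonpos (r := -β) (by linarith)
      exact this (mem_Ioi.mpr ht0) (by norm_num : (1:ℝ)/2 ∈ Ioi (0:ℝ)) ht
    have h2 : ((1:ℝ)/2) ^ (-β) = 2 ^ β := by
      rw [one_div, Real.inv_rpow (by norm_num), Real.rpow_neg (by norm_num), inv_inv]
    have h3 : (2:ℝ) ≤ 2 ^ β := by
      calc (2:ℝ) = 2 ^ (1:ℝ) := (Real.rpow_one 2).symm
        _ ≤ 2 ^ β := Real.rpow_le_rpow_of_exponent_le one_le_two hβ1.le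
    linarith
  set x := t ^ (-β) with hx_def
  have hxpos : (0:ℝ) < x := by linarith
  have hy : |1 - x| = x - 1 := by
    rw [abs_sub_comm]; exact abs_of_nonneg (by linarith)
  rw [hy]
  have hy1 : (1:ℝ) ≤ x - 1 := by linarith
  have hlog_nonneg : 0 ≤ Real.log (x - 1) := Real.log_nonneg hy1
  -- log (x-1) ≤ 16 e
  have hlogx : Real.log x = -β * Real.log t := Real.log_rpow ht0 (-β)
  have hmlogt : 0 ≤ -Real.log t := by
    rcases lt_or_eq_of_le ht1 with h | h
    · have := Real.log_neg ht0 h; linarith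
    · simp [h]
  have hloge : -Real.log t ≤ 8 * e := neg_log_le_rpow ht0
  have hlog_le : Real.log (x - 1) ≤ 16 * e := by
    have h1 : Real.log (x - 1) ≤ Real.log x := by
      apply Real.log_le_log (by linarith) (by linarith)
    have h2 : Real.log x ≤ 2 * (-Real.log t) := by
      rw [hlogx]; nlinarith
    nlinarith
  have hsq : (Real.log (x-1))^2 ≤ 256 * e^2 := by nlinarith
  -- (x-1)^a ≤ e^4
  have ha0 : (0:ℝ) < (2*β)⁻¹ := by positivity
  have hya : (x - 1) ^ (2*β)⁻¹ ≤ e ^ 4 := by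
    have h1 : (x - 1) ^ (2*β)⁻¹ ≤ x ^ (2*β)⁻¹ :=
      Real.rpow_le_rpow (by linarith) (by linarith) ha0.le
    have h2 : x ^ (2*β)⁻¹ = t ^ ((-β) * (2*β)⁻¹) := by
      rw [Real.rpow_mul ht0.le]
    have h3 : (-β) * (2*β)⁻¹ = -(2:ℝ)⁻¹ := by
      field_simp
    have h4 : e ^ 4 = t ^ ((-(8:ℝ)⁻¹) * (4:ℕ)) := hpow 4
    calc (x - 1) ^ (2*β)⁻¹ ≤ x ^ (2*β)⁻¹ := h1
      _ = t ^ ((-β) * (2*β)⁻¹) := h2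
      _ = e ^ 4 := by rw [h3, h4]; norm_num
  have he_pos : 0 < e := by linarith
  have habs : |Real.log (x-1)| = Real.log (x-1) := abs_of_nonneg hlog_nonneg
  rw [habs]
  have hgoal : (784:ℝ) * t ^ (-(3/4) : ℝ) = 784 * e ^ 6 := by
    rw [hpow 6]; norm_num
  rw [hgoal]
  have hrpow_nonneg : 0 ≤ (x - 1) ^ (2*β)⁻¹ := Real.rpow_nonneg (by linarith) _
  have e26 : e^2 ≤ e^6 := pow_le_pow_right₀ he1 (by norm_num)
  have e16 : e ≤ e^6 := by
    calc e = e^1 := (pow_one e).symm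
      _ ≤ e^6 := pow_le_pow_right₀ he1 (by norm_num)
  have e246 : e^2 * e^4 = e^6 := by ring
  nlinarith [sq_nonneg (Real.log (x-1)), pow_nonneg he_pos.le 2, pow_nonneg he_pos.le 4, pow_nonneg he_pos.le 6]

lemma bound2 {β t : ℝ} (hβ1 : 1 < β) (hβ2 : β ≤ 2) (ht0 : 1/2 < t) (ht : t ≤ 1) :
    |Real.log (abs (1 - t ^ (-β)))| + (Real.log (abs (1 - t ^ (-β))))^2 * (2 + (abs (1 - t ^ (-β))) ^ (2*β)⁻¹)
      ≤ 510 * (1 - t) ^ (-(1/4) : ℝ) := by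
  have ha0 : (0:ℝ) < (2*β)⁻¹ := by positivity
  rcases eq_or_lt_of_le ht with h1 | ht1
  · rw [h1]
    simp [Real.one_rpow, Real.log_zero, Real.zero_rpow (ne_of_gt ha0),
      Real.zero_rpow (by norm_num : (-(1/4):ℝ) ≠ 0)]
  have htpos : (0:ℝ) < t := by linarith
  have h1t : (0:ℝ) < 1 - t := by linarith
  have h1t1 : 1 - t ≤ 1 := by linarith
  set e := (1 - t) ^ (-(8:ℝ)⁻¹) with he_def
  have hpow : ∀ n : ℕ, e ^ n = (1-t) ^ ((-(8:ℝ)⁻¹) * n) := by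
    intro n; rw [← Real.rpow_natCast e n, ← Real.rpow_mul h1t.le]
  have he1 : 1 ≤ e := Real.one_le_rpow_of_pos_of_le_one_of_nonpos h1t h1t1 (by norm_num)
  set x := t ^ (-β) with hx_def
  have hx1 : 1 < x :=
    (Real.one_lt_rpow_iff_of_pos htpos).mpr (Or.inr ⟨ht1, by linarith⟩)
  have hx4 : x ≤ 4 := by
    have h1 : x ≤ ((1:ℝ)/2) ^ (-β) := by
      have := antitoneOn_rpow_Ioi_of_exponent_nonpos (r := -β) (by linarith : -β ≤ 0)
      exact this (by norm_num : (1:ℝ)/2 ∈ Ioi (0:ℝ)) (mem_Ioi.mpr htpos) ht0.le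
    have h2 : ((1:ℝ)/2) ^ (-β) = 2 ^ β := by
      rw [one_div, Real.inv_rpow (by norm_num), Real.rpow_neg (by norm_num), inv_inv]
    have h3 : (2:ℝ) ^ β ≤ 2 ^ (2:ℝ) := Real.rpow_le_rpow_of_exponent_le one_le_two hβ2
    have h4 : (2:ℝ) ^ (2:ℝ) = 4 := by
      rw [show (2:ℝ) = ((2:ℕ):ℝ) from by norm_num, Real.rpow_natCast]; norm_num
    rw [h4] at h3; rw [h2] at h1; linarith
  have hy : abs (1 - x) = x - 1 := by
    rw [abs_sub_comm]; exact abs_of_nonneg (by linarith)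
  rw [hy]
  have hypos : (0:ℝ) < x - 1 := by linarith
  -- lower bound : 1 - t ≤ x - 1
  have hlow : 1 - t ≤ x - 1 := by
    set u := t ^ β with hu_def
    have hu_pos : 0 < u := Real.rpow_pos_of_pos htpos β
    have hut : u ≤ t := by
      have := Real.rpow_le_rpow_of_exponent_ge htpos ht (hβ1.le)
      rwa [Real.rpow_one] at this
    have hxu : x * u = 1 := by
      rw [hx_def, hu_def, Real.rpow_neg htpos.le]
      exact inv_mul_cancel₀ (ne_of_gt hu_pos)
    have h1 : 1 - u ≤ x - 1 := by nlinarith [sq_nonneg (1 - u)]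
    linarith
  -- log bounds
  have hup : Real.log (x - 1) ≤ 2 := by
    have := Real.log_le_sub_one_of_pos hypos; linarith
  have hlowlog : Real.log (1 - t) ≤ Real.log (x - 1) := Real.log_le_log h1t hlow
  have hneg : -Real.log (1 - t) ≤ 8 * e := neg_log_le_rpow h1t
  have habs : |Real.log (x - 1)| ≤ 10 * e := by
    rw [abs_le]; constructor
    · linarith
    · linarith
  have hsq : (Real.log (x-1))^2 ≤ 100 * e^2 := by
    have h := sq_le_sq' (by linarith : -(10*e) ≤ Real.log (x-1)) (by linarith)
    nlinarith
  have hya : (x - 1) ^ (2*β)⁻¹ ≤ 3 := by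
    have ha1 : (2*β)⁻¹ ≤ 1 := by
      rw [inv_le_one_iff₀]; right; linarith
    rcases le_or_gt (x-1) 1 with h | h
    · have := Real.rpow_le_one hypos.le h ha0.le; linarith
    · have h2 : (x-1) ^ (2*β)⁻¹ ≤ (x-1) ^ (1:ℝ) :=
        Real.rpow_le_rpow_of_exponent_le h.le ha1
      rw [Real.rpow_one] at h2; linarith
  have hgoal : (510:ℝ) * (1-t) ^ (-(1/4) : ℝ) = 510 * e ^ 2 := by
    rw [hpow 2]; norm_num
  rw [hgoal]
  have hlog_abs_sq : (Real.log (x-1))^2 * (2 + (x-1) ^ (2*β)⁻¹) ≤ 100 * e^2 * 5 := by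
    have h1 : (0:ℝ) ≤ (x-1) ^ (2*β)⁻¹ := Real.rpow_nonneg hypos.le _
    have h2 : 2 + (x-1) ^ (2*β)⁻¹ ≤ 5 := by linarith
    nlinarith [sq_nonneg (Real.log (x-1))]
  have he2 : e ≤ e^2 := by nlinarith
  nlinarith [abs_nonneg (Real.log (x-1)), (abs_le.mp habs).2]

lemma bound3 {β t : ℝ} (hβ1 : 1 < β) (hβ2 : β ≤ 2) (ht0 : 1 < t) (ht : t ≤ 2) :
    |Real.log (abs (1 - t ^ (-β)))| + (Real.log (abs (1 - t ^ (-β))))^2 * (2 + (abs (1 - t ^ (-β))) ^ (2*β)⁻¹)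
      ≤ 310 * (t - 1) ^ (-(1/4) : ℝ) := by
  have ha0 : (0:ℝ) < (2*β)⁻¹ := by positivity
  have htpos : (0:ℝ) < t := by linarith
  have ht1 : (0:ℝ) < t - 1 := by linarith
  have ht11 : t - 1 ≤ 1 := by linarith
  set e := (t - 1) ^ (-(8:ℝ)⁻¹) with he_def
  have hpow : ∀ n : ℕ, e ^ n = (t-1) ^ ((-(8:ℝ)⁻¹) * n) := by
    intro n; rw [← Real.rpow_natCast e n, ← Real.rpow_mul ht1.le]
  have he1 : 1 ≤ e := Real.one_le_rpow_of_pos_of_le_one_of_nonpos ht1 ht11 (by norm_num)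
  set x := t ^ (-β) with hx_def
  have hx1 : x < 1 := by
    have := Real.rpow_lt_rpow_of_exponent_lt ht0 (by linarith : -β < 0)
    rwa [Real.rpow_zero] at this
  have hxpos : 0 < x := Real.rpow_pos_of_pos htpos _
  have hxlow : 4⁻¹ ≤ x := by
    have h1 : (2:ℝ) ^ (-β) ≤ x := by
      have := antitoneOn_rpow_Ioi_of_exponent_nonpos (r := -β) (by linarith : -β ≤ 0)
      exact this (mem_Ioi.mpr htpos) (by norm_num : (2:ℝ) ∈ Ioi (0:ℝ)) ht
    have h2 : (2:ℝ) ^ (-(2:ℝ)) ≤ 2 ^ (-β) :=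
      Real.rpow_le_rpow_of_exponent_le one_le_two (by linarith)
    have h3 : (2:ℝ) ^ (-(2:ℝ)) = 4⁻¹ := by
      rw [Real.rpow_neg (by norm_num),
        show (2:ℝ) = ((2:ℕ):ℝ) from by norm_num, Real.rpow_natCast]; norm_num
    rw [h3] at h2; linarith
  have hy : abs (1 - x) = 1 - x := abs_of_nonneg (by linarith)
  rw [hy]
  have hypos : (0:ℝ) < 1 - x := by linarith
  have hy34 : 1 - x ≤ 3/4 := by linarith
  -- lower bound : (t-1)/4 ≤ 1 - x
  have hlow : (t-1)/4 ≤ 1 - x := by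
    have htβ : t ≤ t ^ β := by
      have := Real.rpow_le_rpow_of_exponent_le ht0.le hβ1.le
      rwa [Real.rpow_one] at this
    have hxu : x * t ^ β = 1 := by
      rw [hx_def, Real.rpow_neg htpos.le]
      exact inv_mul_cancel₀ (ne_of_gt (Real.rpow_pos_of_pos htpos β))
    nlinarith
  -- log bounds
  have hlognp : Real.log (1 - x) ≤ 0 := Real.log_nonpos hypos.le (by linarith)
  have hneg : -Real.log (t - 1) ≤ 8 * e := neg_log_le_rpow ht1
  have hlog4 : Real.log 4 ≤ 2 := by
    have h1 : Real.log 4 = Real.log (2*2) := by norm_num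
    rw [h1, Real.log_mul (by norm_num) (by norm_num)]
    have := Real.log_le_sub_one_of_pos (by norm_num : (0:ℝ) < 2)
    linarith
  have hloglow : Real.log (t-1) - Real.log 4 ≤ Real.log (1 - x) := by
    have h1 : Real.log ((t-1)/4) ≤ Real.log (1-x) :=
      Real.log_le_log (by positivity) hlow
    rwa [Real.log_div (by linarith) (by norm_num)] at h1
  have habs : |Real.log (1-x)| ≤ 10 * e := by
    rw [abs_le]; constructor
    · linarith
    · linarith [mul_pos (by norm_num : (0:ℝ) < 10) (by linarith : (0:ℝ) < e)]
  have hsq : (Real.log (1-x))^2 ≤ 100 * e^2 := by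
    have h := sq_le_sq' (abs_le.mp habs).1 (abs_le.mp habs).2
    nlinarith
  have hya : (1-x) ^ (2*β)⁻¹ ≤ 1 := Real.rpow_le_one hypos.le (by linarith) ha0.le
  have hgoal : (310:ℝ) * (t-1) ^ (-(1/4) : ℝ) = 310 * e ^ 2 := by
    rw [hpow 2]; norm_num
  rw [hgoal]
  have h1 : (0:ℝ) ≤ (1-x) ^ (2*β)⁻¹ := Real.rpow_nonneg hypos.le _
  have he2 : e ≤ e^2 := by nlinarith
  nlinarith [sq_nonneg (Real.log (1-x)), (abs_le.mp habs).2, abs_nonneg (Real.log (1-x))]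

lemma bound4 {β t : ℝ} (hβ1 : 1 < β) (hβ2 : β ≤ 2) (ht : 2 < t) :
    |Real.log (abs (1 - t ^ (-β)))| + (Real.log (abs (1 - t ^ (-β))))^2 * (2 + (abs (1 - t ^ (-β))) ^ (2*β)⁻¹)
      ≤ 8 * t ^ (-β) := by
  have ha0 : (0:ℝ) < (2*β)⁻¹ := by positivity
  have htpos : (0:ℝ) < t := by linarith
  set x := t ^ (-β) with hx_def
  have hxpos : 0 < x := Real.rpow_pos_of_pos htpos _
  have hxhalf : x ≤ 1/2 := by
    have h1 : x ≤ (2:ℝ) ^ (-β) := by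
      have := antitoneOn_rpow_Ioi_of_exponent_nonpos (r := -β) (by linarith : -β ≤ 0)
      exact this (by norm_num : (2:ℝ) ∈ Ioi (0:ℝ)) (mem_Ioi.mpr htpos) ht.le
    have h2 : (2:ℝ) ^ (-β) ≤ 2 ^ (-(1:ℝ)) :=
      Real.rpow_le_rpow_of_exponent_le one_le_two (by linarith)
    have h3 : (2:ℝ) ^ (-(1:ℝ)) = 1/2 := by
      rw [Real.rpow_neg (by norm_num), Real.rpow_one]; norm_num
    rw [h3] at h2; linarith
  have hy : abs (1 - x) = 1 - x := abs_of_nonneg (by linarith)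
  rw [hy]
  have hypos : (0:ℝ) < 1 - x := by linarith
  have hlognp : Real.log (1 - x) ≤ 0 := Real.log_nonpos hypos.le (by linarith)
  have hkey : -Real.log (1 - x) ≤ 2 * x := by
    have h1 : Real.log (1-x)⁻¹ ≤ (1-x)⁻¹ - 1 :=
      Real.log_le_sub_one_of_pos (by positivity)
    rw [Real.log_inv] at h1
    have h2 : (1-x)⁻¹ - 1 ≤ 2 * x := by
      have h3 : (1-x)⁻¹ - 1 = x / (1-x) := by field_simp; ring
      rw [h3]
      rw [div_le_iff₀ hypos]
      nlinarith
    linarith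
  have habs : |Real.log (1-x)| ≤ 2 * x := by
    rw [abs_le]; constructor <;> linarith
  have hsq : (Real.log (1-x))^2 ≤ 2 * x := by
    have h := sq_le_sq' (abs_le.mp habs).1 (abs_le.mp habs).2
    nlinarith
  have hya : (1-x) ^ (2*β)⁻¹ ≤ 1 := Real.rpow_le_one hypos.le (by linarith) ha0.le
  have h1 : (0:ℝ) ≤ (1-x) ^ (2*β)⁻¹ := Real.rpow_nonneg hypos.le _
  nlinarith [sq_nonneg (Real.log (1-x)), (abs_le.mp habs).2, abs_nonneg (Real.log (1-x))]

lemma phi_nonneg {β s : ℝ} :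
    0 ≤ |Real.log (abs (1 - s ^ (-β)))| +
      (Real.log (abs (1 - s ^ (-β))))^2 * (2 + (abs (1 - s ^ (-β))) ^ (2*β)⁻¹) := by
  have h1 : (0:ℝ) ≤ (abs (1 - s ^ (-β))) ^ (2*β)⁻¹ := Real.rpow_nonneg (abs_nonneg _) _
  have h2 : (0:ℝ) ≤ (Real.log (abs (1 - s ^ (-β))))^2 := sq_nonneg _
  nlinarith [abs_nonneg (Real.log (abs (1 - s ^ (-β))))]

lemma master_int {β : ℝ} (hβ1 : 1 < β) (hβ2 : β ≤ 2) :
    Integrable (fun t : ℝ => |Real.log (abs (1 - (abs t) ^ (-β)))| +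
      (Real.log (abs (1 - (abs t) ^ (-β))))^2 * (2 + (abs (1 - (abs t) ^ (-β))) ^ (2*β)⁻¹)) := by
  have hβ0 : -β ≠ 0 := by intro h; nlinarith [neg_eq_zero.mp h]
  have ha0 : ((2*β)⁻¹ : ℝ) ≠ 0 := by positivity
  have mY : Measurable fun t : ℝ => abs (1 - (abs t) ^ (-β)) :=
    (measurable_const.sub (meas_absrpow hβ0)).abs
  have mL : Measurable fun t : ℝ => Real.log (abs (1 - (abs t) ^ (-β))) :=
    Real.measurable_log.comp mY
  have mYa : Measurable fun t : ℝ => (abs (1 - (abs t) ^ (-β))) ^ (2*β)⁻¹ :=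
    meas_rpow_comp mY (fun _ => abs_nonneg _) ha0
  have mΦ : Measurable (fun t : ℝ => |Real.log (abs (1 - (abs t) ^ (-β)))| +
      (Real.log (abs (1 - (abs t) ^ (-β))))^2 * (2 + (abs (1 - (abs t) ^ (-β))) ^ (2*β)⁻¹)) :=
    mL.abs.add ((mL.pow_const 2).mul (measurable_const.add mYa))
  apply integrable_of_even_pos mΦ.aestronglyMeasurable
  · intro x; simp only [abs_neg]
  · -- IntegrableOn on Ioi 0
    have hunion : Ioc (0:ℝ) 2⁻¹ ∪ Ioc (2⁻¹:ℝ) 1 ∪ Ioc (1:ℝ) 2 ∪ Ioi (2:ℝ) = Ioi (0:ℝ) := by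
      rw [Ioc_union_Ioc_eq_Ioc (by norm_num) (by norm_num),
        Ioc_union_Ioc_eq_Ioc (by norm_num) (by norm_num),
        Ioc_union_Ioi_eq_Ioi (by norm_num)]
    rw [← hunion]
    refine (((?_ : IntegrableOn _ _ _).union ?_).union ?_).union ?_
    · -- (0, 1/2]
      have hD : IntegrableOn (fun t : ℝ => 784 * t ^ (-(3/4):ℝ)) (Ioc 0 2⁻¹) := by
        have h := intervalIntegral.intervalIntegrable_rpow' (a := 0) (b := 2⁻¹)
          (r := -(3/4)) (by norm_num)
        rw [intervalIntegrable_iff, uIoc_of_le (by norm_num : (0:ℝ) ≤ 2⁻¹)] at h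
        exact h.const_mul 784
      refine Integrable.mono' hD mΦ.aestronglyMeasurable.restrict ?_
      rw [ae_restrict_iff' measurableSet_Ioc]
      refine ae_of_all _ (fun t ht => ?_)
      have h0 : abs t = t := abs_of_pos ht.1
      rw [Real.norm_eq_abs, abs_of_nonneg phi_nonneg, h0]
      exact bound1 hβ1 hβ2 ht.1 (by simpa [one_div] using ht.2)
    · -- (1/2, 1]
      have hD : IntegrableOn (fun t : ℝ => 510 * (1-t) ^ (-(1/4):ℝ)) (Ioc 2⁻¹ 1) := by
        have h := intervalIntegral.intervalIntegrable_rpow' (a := 0) (b := 2⁻¹)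
          (r := -(1/4)) (by norm_num)
        have h2 := h.comp_sub_left 1
        rw [show (1:ℝ) - 0 = 1 from by norm_num, show (1:ℝ) - 2⁻¹ = 2⁻¹ from by norm_num,
          intervalIntegrable_iff, uIoc_comm, uIoc_of_le (by norm_num : (2⁻¹:ℝ) ≤ 1)] at h2
        exact h2.const_mul 510
      refine Integrable.mono' hD mΦ.aestronglyMeasurable.restrict ?_
      rw [ae_restrict_iff' measurableSet_Ioc]
      refine ae_of_all _ (fun t ht => ?_)
      have h0 : abs t = t := abs_of_pos (by have := ht.1; norm_num at this ⊢; linarith)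
      rw [Real.norm_eq_abs, abs_of_nonneg phi_nonneg, h0]
      exact bound2 hβ1 hβ2 (by simpa [one_div] using ht.1) ht.2
    · -- (1, 2]
      have hD : IntegrableOn (fun t : ℝ => 310 * (t-1) ^ (-(1/4):ℝ)) (Ioc 1 2) := by
        have h := intervalIntegral.intervalIntegrable_rpow' (a := 0) (b := 1)
          (r := -(1/4)) (by norm_num)
        have h2 := h.comp_sub_right 1
        rw [show (0:ℝ) + 1 = 1 from by norm_num, show (1:ℝ) + 1 = 2 from by norm_num,
          intervalIntegrable_iff, uIoc_of_le (by norm_num : (1:ℝ) ≤ 2)] at h2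
        exact h2.const_mul 310
      refine Integrable.mono' hD mΦ.aestronglyMeasurable.restrict ?_
      rw [ae_restrict_iff' measurableSet_Ioc]
      refine ae_of_all _ (fun t ht => ?_)
      have h0 : abs t = t := abs_of_pos (by linarith [ht.1])
      rw [Real.norm_eq_abs, abs_of_nonneg phi_nonneg, h0]
      exact bound3 hβ1 hβ2 ht.1 ht.2
    · -- (2, ∞)
      have hD : IntegrableOn (fun t : ℝ => 8 * t ^ (-β)) (Ioi 2) := by
        have h := integrableOn_Ioi_rpow_of_lt (by linarith : -β < -1) (by norm_num : (0:ℝ) < 2)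
        exact h.const_mul 8
      refine Integrable.mono' hD mΦ.aestronglyMeasurable.restrict ?_
      rw [ae_restrict_iff' measurableSet_Ioi]
      refine ae_of_all _ (fun t ht => ?_)
      have h0 : abs t = t := abs_of_pos (by have := mem_Ioi.mp ht; linarith)
      rw [Real.norm_eq_abs, abs_of_nonneg phi_nonneg, h0]
      exact bound4 hβ1 hβ2 (mem_Ioi.mp ht)

lemma measY {β : ℝ} (hβ : β ≠ 0) : Measurable fun t : ℝ => abs (1 - (abs t) ^ (-β)) :=
  (measurable_const.sub (meas_absrpow (neg_ne_zero.mpr hβ))).abs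

lemma logY_int {β : ℝ} (hβ1 : 1 < β) (hβ2 : β ≤ 2) :
    Integrable (fun t : ℝ => Real.log (abs (1 - (abs t) ^ (-β)))) := by
  have hβ0 : β ≠ 0 := by linarith
  refine (master_int hβ1 hβ2).mono'
    ((Real.measurable_log.comp (measY hβ0)).aestronglyMeasurable) (ae_of_all _ fun t => ?_)
  rw [Real.norm_eq_abs]
  refine le_add_of_nonneg_right (mul_nonneg (sq_nonneg _) ?_)
  have := Real.rpow_nonneg (abs_nonneg (1 - (abs t) ^ (-β))) (2*β)⁻¹
  linarith

lemma G_int {β : ℝ} (hβ1 : 1 < β) (hβ2 : β ≤ 2) :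
    Integrable (fun t : ℝ => (Real.log (abs (1 - (abs t) ^ (-β))))^2 *
      (2 + (abs (1 - (abs t) ^ (-β))) ^ (2*β)⁻¹)) := by
  have hβ0 : β ≠ 0 := by linarith
  have ha0 : ((2*β)⁻¹:ℝ) ≠ 0 := by positivity
  have mL := Real.measurable_log.comp (measY hβ0)
  have mYa := meas_rpow_comp (measY hβ0) (fun _ => abs_nonneg _) ha0
  refine (master_int hβ1 hβ2).mono'
    ((mL.pow_const 2).mul (measurable_const.add mYa)).aestronglyMeasurable
    (ae_of_all _ fun t => ?_)
  rw [Real.norm_eq_abs]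
  have h1 : (0:ℝ) ≤ (abs (1 - (abs t) ^ (-β))) ^ (2*β)⁻¹ := Real.rpow_nonneg (abs_nonneg _) _
  have h2 : (0:ℝ) ≤ (Real.log (abs (1 - (abs t) ^ (-β))))^2 *
      (2 + (abs (1 - (abs t) ^ (-β))) ^ (2*β)⁻¹) :=
    mul_nonneg (sq_nonneg _) (by linarith)
  rw [abs_of_nonneg h2]
  exact le_add_of_nonneg_left (abs_nonneg _)

noncomputable def Ff : ℝ → ℝ :=
  fun t => (t-1) * Real.log (t-1) + (t+1) * Real.log (t+1) - 2*(t * Real.log t)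

lemma Ff_cont : Continuous Ff := by
  unfold Ff
  have h := Real.continuous_mul_log
  exact ((h.comp (continuous_id.sub continuous_const)).add
    (h.comp (continuous_id.add continuous_const))).sub (continuous_const.mul h)

lemma rpow_neg_two_eq {t : ℝ} (ht : 0 < t) : t ^ (-(2:ℝ)) = (t*t)⁻¹ := by
  rw [Real.rpow_neg ht.le, show (2:ℝ) = ((2:ℕ):ℝ) from by norm_num, Real.rpow_natCast]
  norm_num [sq]

lemma f2_eq {t : ℝ} (ht : 0 < t) (ht1 : t ≠ 1) :
    Real.log (abs (1 - t ^ (-(2:ℝ)))) = Real.log (t-1) + Real.log (t+1) - 2 * Real.log t := by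
  have h1 : 1 - t ^ (-(2:ℝ)) = (t-1)*(t+1)/(t*t) := by
    rw [rpow_neg_two_eq ht]; field_simp; ring
  rw [h1, Real.log_abs]
  have ht0 : t ≠ 0 := ne_of_gt ht
  have hm1 : t - 1 ≠ 0 := sub_ne_zero.mpr ht1
  have hp1 : t + 1 ≠ 0 := by positivity
  rw [Real.log_div (mul_ne_zero hm1 hp1) (mul_ne_zero ht0 ht0),
    Real.log_mul hm1 hp1, Real.log_mul ht0 ht0]
  ring

lemma Ff_deriv {t : ℝ} (ht : 0 < t) (ht1 : t ≠ 1) :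
    HasDerivAt Ff (Real.log (abs (1 - t ^ (-(2:ℝ))))) t := by
  have hA : HasDerivAt (fun t : ℝ => t - 1) 1 t := (hasDerivAt_id t).sub_const 1
  have hB : HasDerivAt (fun t : ℝ => t + 1) 1 t := (hasDerivAt_id t).add_const 1
  have h1 : HasDerivAt (fun u : ℝ => u * Real.log u) (Real.log (t-1) + 1) (t-1) :=
    Real.hasDerivAt_mul_log (sub_ne_zero.mpr ht1)
  have h2 : HasDerivAt (fun u : ℝ => u * Real.log u) (Real.log (t+1) + 1) (t+1) :=
    Real.hasDerivAt_mul_log (by positivity)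
  have h3 : HasDerivAt (fun u : ℝ => u * Real.log u) (Real.log t + 1) t :=
    Real.hasDerivAt_mul_log (ne_of_gt ht)
  have H1 := HasDerivAt.comp t h1 hA
  have H2 := HasDerivAt.comp t h2 hB
  have H := (H1.add H2).sub (h3.const_mul 2)
  have heq : (Real.log (t-1) + 1) * 1 + (Real.log (t+1) + 1) * 1 - 2*(Real.log t + 1)
      = Real.log (abs (1 - t ^ (-(2:ℝ)))) := by
    rw [f2_eq ht ht1]; ring
  rw [heq] at H
  exact H

lemma Ff_one : Ff 1 = 2 * Real.log 2 := by
  unfold Ff; norm_num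

lemma Ff_zero : Ff 0 = 0 := by
  unfold Ff
  have h : Real.log (0 - 1) = 0 := by
    rw [show (0:ℝ) - 1 = -1 from by norm_num, show (-1 : ℝ) = -(1:ℝ) from rfl,
      Real.log_neg_eq_log, Real.log_one]
  rw [h]
  norm_num

lemma Ff_tendsto : Tendsto Ff atTop (𝓝 0) := by
  have hev : ∀ᶠ t : ℝ in atTop, Ff t =
      t * Real.log (abs (1 - t ^ (-(2:ℝ)))) + (Real.log (t+1) - Real.log (t-1)) := by
    filter_upwards [eventually_ge_atTop (2:ℝ)] with t ht
    have ht0 : (0:ℝ) < t := by linarith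
    have ht1 : t ≠ 1 := by intro h; rw [h] at ht; norm_num at ht
    rw [f2_eq ht0 ht1]
    unfold Ff; ring
  have T1 : Tendsto (fun t : ℝ => t * Real.log (abs (1 - t ^ (-(2:ℝ))))) atTop (𝓝 0) := by
    apply squeeze_zero_norm' (a := fun t : ℝ => 4 * t⁻¹)
    · filter_upwards [eventually_ge_atTop (2:ℝ)] with t ht
      have ht0 : (0:ℝ) < t := by linarith
      have hx : t ^ (-(2:ℝ)) = (t*t)⁻¹ := rpow_neg_two_eq ht0
      set x := t ^ (-(2:ℝ)) with hxd
      have hxpos : 0 < x := Real.rpow_pos_of_pos ht0 _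
      have hxsmall : x ≤ 4⁻¹ := by
        rw [hx]
        have h4 : (4:ℝ) ≤ t*t := by nlinarith
        have := inv_anti₀ (by norm_num : (0:ℝ) < 4) h4
        linarith
      have habs : abs (1 - x) = 1 - x := abs_of_nonneg (by linarith)
      rw [habs]
      have hlognp : Real.log (1 - x) ≤ 0 := Real.log_nonpos (by linarith) (by linarith)
      have hkey : -Real.log (1 - x) ≤ 2 * x := by
        have h1x : (0:ℝ) < 1 - x := by linarith
        have h1 : Real.log (1-x)⁻¹ ≤ (1-x)⁻¹ - 1 :=
          Real.log_le_sub_one_of_pos (inv_pos.mpr h1x)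
        rw [Real.log_inv] at h1
        have h2 : (1-x)⁻¹ - 1 ≤ 2 * x := by
          have h3 : (1-x)⁻¹ - 1 = x / (1-x) := by
            field_simp
            ring
          rw [h3, div_le_iff₀ h1x]
          nlinarith
        linarith
      have hb : ‖t * Real.log (1 - x)‖ ≤ t * (2*x) := by
        rw [norm_mul, Real.norm_eq_abs, Real.norm_eq_abs, abs_of_pos ht0,
          abs_of_nonpos hlognp]
        exact mul_le_mul_of_nonneg_left (by linarith) ht0.le
      calc ‖t * Real.log (1 - x)‖ ≤ t * (2*x) := hb
        _ = 2 * t⁻¹ := by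
            show t * (2 * t ^ (-(2:ℝ))) = 2 * t⁻¹
            rw [rpow_neg_two_eq ht0]
            field_simp
        _ ≤ 4 * t⁻¹ := by
          have : (0:ℝ) < t⁻¹ := by positivity
          linarith
    · have : Tendsto (fun t : ℝ => t⁻¹) atTop (𝓝 0) := tendsto_inv_atTop_zero
      have h4 := this.const_mul (4:ℝ)
      simpa using h4
  have T2 : Tendsto (fun t : ℝ => Real.log (t+1) - Real.log (t-1)) atTop (𝓝 0) := by
    have hq : Tendsto (fun t : ℝ => (t+1)/(t-1)) atTop (𝓝 1) := by
      have hev2 : ∀ᶠ t : ℝ in atTop, 1 + 2*(t-1)⁻¹ = (t+1)/(t-1) := by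
        filter_upwards [eventually_ge_atTop (2:ℝ)] with t ht
        have : t - 1 ≠ 0 := by intro h; nlinarith [sub_eq_zero.mp h]
        field_simp
        ring
      have hbase : Tendsto (fun t : ℝ => 1 + 2*(t-1)⁻¹) atTop (𝓝 1) := by
        have h1 : Tendsto (fun t : ℝ => t - 1) atTop atTop :=
          tendsto_atTop_add_const_right _ (-1) tendsto_id
        have h2 : Tendsto (fun t : ℝ => (t-1)⁻¹) atTop (𝓝 0) :=
          tendsto_inv_atTop_zero.comp h1
        have h3 := (h2.const_mul (2:ℝ)).const_add (1:ℝ)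
        simpa using h3
      exact Tendsto.congr' hev2 hbase
    have hlog : Tendsto (fun t : ℝ => Real.log ((t+1)/(t-1))) atTop (𝓝 0) := by
      have := (Real.continuousAt_log one_ne_zero).tendsto.comp hq
      simpa [Real.log_one, Function.comp_def] using this
    apply Tendsto.congr' _ hlog
    filter_upwards [eventually_ge_atTop (2:ℝ)] with t ht
    rw [Real.log_div (by intro h; nlinarith [add_eq_zero_iff_eq_neg.mp h])
      (by intro h; nlinarith [sub_eq_zero.mp h])]
  have hT := (T1.add T2)
  rw [add_zero] at hT
  exact Tendsto.congr' (Filter.EventuallyEq.symm hev) hT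

lemma log_int_two_pos : ∫ t in Ioi (0:ℝ), Real.log (abs (1 - t ^ (-(2:ℝ)))) = 0 := by
  have hint : Integrable (fun t : ℝ => Real.log (abs (1 - (abs t) ^ (-(2:ℝ))))) :=
    logY_int one_lt_two le_rfl
  have hIoc : IntegrableOn (fun t : ℝ => Real.log (abs (1 - t ^ (-(2:ℝ))))) (Ioc 0 1) := by
    refine (hint.integrableOn).congr_fun (fun t ht => ?_) measurableSet_Ioc
    dsimp only; rw [abs_of_pos ht.1]
  have hIoi : IntegrableOn (fun t : ℝ => Real.log (abs (1 - t ^ (-(2:ℝ))))) (Ioi 1) := by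
    refine (hint.integrableOn).congr_fun (fun t ht => ?_) measurableSet_Ioi
    dsimp only; rw [abs_of_pos (by linarith [mem_Ioi.mp ht] : (0:ℝ) < t)]
  have part1 : ∫ t in Ioc (0:ℝ) 1, Real.log (abs (1 - t ^ (-(2:ℝ)))) = 2 * Real.log 2 := by
    have h := intervalIntegral.integral_eq_sub_of_hasDerivAt_of_le (f := Ff)
      (f' := fun t => Real.log (abs (1 - t ^ (-(2:ℝ))))) (zero_le_one)
      (Ff_cont.continuousOn)
      (fun x hx => Ff_deriv hx.1 (ne_of_lt hx.2))
      ((intervalIntegrable_iff_integrableOn_Ioc_of_le zero_le_one).mpr hIoc)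
    rw [intervalIntegral.integral_of_le zero_le_one] at h
    rw [h, Ff_one, Ff_zero]; ring
  have part2 : ∫ t in Ioi (1:ℝ), Real.log (abs (1 - t ^ (-(2:ℝ)))) = -(2 * Real.log 2) := by
    have h := integral_Ioi_of_hasDerivAt_of_tendsto (f := Ff)
      (f' := fun t => Real.log (abs (1 - t ^ (-(2:ℝ))))) (a := 1)
      (Ff_cont.continuousWithinAt)
      (fun x hx => Ff_deriv (by linarith [mem_Ioi.mp hx]) (ne_of_gt (mem_Ioi.mp hx)))
      hIoi Ff_tendsto
    rw [h, Ff_one]; ring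
  have hsplit : Ioc (0:ℝ) 1 ∪ Ioi (1:ℝ) = Ioi 0 := Ioc_union_Ioi_eq_Ioi zero_le_one
  rw [← hsplit, setIntegral_union (Ioc_disjoint_Ioi le_rfl) measurableSet_Ioi hIoc hIoi,
    part1, part2]
  ring

lemma log_int_two : ∫ t : ℝ, Real.log (abs (1 - (abs t) ^ (-(2:ℝ)))) = 0 := by
  have h := integral_comp_abs (f := fun s : ℝ => Real.log (abs (1 - s ^ (-(2:ℝ)))))
  rw [h, log_int_two_pos]
  ring

lemma cmp_le {β s : ℝ} (hβ1 : 1 < β) (hβ2 : β < 2) (hs : 0 ≤ s) :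
    Real.log (abs (1 - s ^ (-β))) ≤ Real.log (abs (1 - s ^ (-(2:ℝ)))) := by
  rcases eq_or_lt_of_le hs with h0 | hs0
  · rw [← h0, Real.zero_rpow (by intro h; nlinarith [neg_eq_zero.mp h] : -β ≠ 0),
      Real.zero_rpow (by norm_num : (-(2:ℝ)) ≠ 0)]
  rcases lt_trichotomy s 1 with h1 | h1 | h1
  · have hbβ : 1 < s^(-β) :=
      (Real.one_lt_rpow_iff_of_pos hs0).mpr (Or.inr ⟨h1, by linarith⟩)
    have hb2 : s^(-β) < s^(-(2:ℝ)) :=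
      Real.rpow_lt_rpow_of_exponent_gt hs0 h1 (by linarith)
    have e1 : abs (1 - s^(-β)) = s^(-β) - 1 := by
      rw [abs_sub_comm]; exact abs_of_nonneg (by linarith)
    have e2 : abs (1 - s^(-(2:ℝ))) = s^(-(2:ℝ)) - 1 := by
      rw [abs_sub_comm]; exact abs_of_nonneg (by linarith)
    rw [e1, e2]
    exact Real.log_le_log (by linarith) (by linarith)
  · rw [h1]; simp [Real.one_rpow]
  · have hbβ : s^(-β) < 1 := by
      have := Real.rpow_lt_rpow_of_exponent_lt h1 (by linarith : -β < 0)
      rwa [Real.rpow_zero] at this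
    have hb2 : s^(-(2:ℝ)) < s^(-β) :=
      Real.rpow_lt_rpow_of_exponent_lt h1 (by linarith)
    have e1 : abs (1 - s^(-β)) = 1 - s^(-β) := abs_of_nonneg (by linarith)
    have e2 : abs (1 - s^(-(2:ℝ))) = 1 - s^(-(2:ℝ)) := abs_of_nonneg (by linarith)
    rw [e1, e2]
    exact Real.log_le_log (by linarith) (by linarith)

lemma cmp_lt {β s : ℝ} (hβ1 : 1 < β) (hβ2 : β < 2) (hs : 1 < s) :
    Real.log (abs (1 - s ^ (-β))) < Real.log (abs (1 - s ^ (-(2:ℝ)))) := by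
  have hs0 : (0:ℝ) < s := by linarith
  have hbβ : s^(-β) < 1 := by
    have := Real.rpow_lt_rpow_of_exponent_lt hs (by linarith : -β < 0)
    rwa [Real.rpow_zero] at this
  have hb2 : s^(-(2:ℝ)) < s^(-β) :=
    Real.rpow_lt_rpow_of_exponent_lt hs (by linarith)
  have e1 : abs (1 - s^(-β)) = 1 - s^(-β) := abs_of_nonneg (by linarith)
  have e2 : abs (1 - s^(-(2:ℝ))) = 1 - s^(-(2:ℝ)) := abs_of_nonneg (by linarith)
  rw [e1, e2]
  exact Real.log_lt_log (by linarith) (by linarith)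

lemma I_neg {β : ℝ} (hβ1 : 1 < β) (hβ2 : β < 2) :
    ∫ t : ℝ, Real.log (abs (1 - (abs t) ^ (-β))) < 0 := by
  have hf := logY_int hβ1 hβ2.le
  have hg := logY_int one_lt_two le_rfl
  set f := fun t : ℝ => Real.log (abs (1 - (abs t) ^ (-β))) with hfd
  set g := fun t : ℝ => Real.log (abs (1 - (abs t) ^ (-(2:ℝ)))) with hgd
  have hle : ∀ t, f t ≤ g t := fun t => cmp_le hβ1 hβ2 (abs_nonneg t)
  have hpos : 0 < ∫ t : ℝ, (g t - f t) := by
    refine (integral_pos_iff_support_of_nonneg (fun t => ?_) (hg.sub hf)).mpr ?_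
    · exact sub_nonneg.mpr (hle t)
    · have hsub : Ici (2:ℝ) ⊆ Function.support (fun t => g t - f t) := by
        intro t ht
        have h2 : (1:ℝ) < |t| := by
          rw [abs_of_pos (by linarith [mem_Ici.mp ht] : (0:ℝ) < t)]
          linarith [mem_Ici.mp ht]
        exact ne_of_gt (sub_pos.mpr (cmp_lt hβ1 hβ2 h2))
      calc (0:ENNReal) < ⊤ := by norm_num
        _ = volume (Ici (2:ℝ)) := Real.volume_Ici.symm
        _ ≤ volume (Function.support fun t => g t - f t) := measure_mono hsub
  rw [integral_sub hg hf] at hpos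
  have : ∫ t : ℝ, g t = 0 := log_int_two
  linarith

lemma Ypos {β t : ℝ} (hβpos : 0 < β) (ht : t ∉ ({0,1,-1} : Set ℝ)) :
    0 < abs (1 - (abs t) ^ (-β)) := by
  simp only [mem_insert_iff, mem_singleton_iff, not_or] at ht
  obtain ⟨h0, h1, hm1⟩ := ht
  have hs0 : 0 < |t| := abs_pos.mpr h0
  have hs1 : |t| ≠ 1 := by
    intro h
    rcases (abs_eq zero_le_one).mp h with h | h
    · exact h1 h
    · exact hm1 h
  rw [abs_pos, sub_ne_zero]
  intro h
  rcases lt_or_gt_of_ne hs1 with hlt | hgt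
  · have h2 : 1 < |t|^(-β) :=
      (Real.one_lt_rpow_iff_of_pos hs0).mpr (Or.inr ⟨hlt, by linarith⟩)
    rw [← h] at h2; exact lt_irrefl _ h2
  · have h2 : |t|^(-β) < 1 := by
      have := Real.rpow_lt_rpow_of_exponent_lt hgt (by linarith : -β < 0)
      rwa [Real.rpow_zero] at this
    rw [← h] at h2; exact lt_irrefl _ h2

/-- For β ∈ (1,2) there exists p₀ ∈ (0, 1/β) such that for every
p ∈ (0, p₀) the integral J(p) = ∫ (|1 − |t|^{−β}|^p − 1) dt converges absolutely
and J(p) < 0. -/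
theorem statement9 (β : ℝ) (hβ : β ∈ Set.Ioo (1 : ℝ) 2) :
    ∃ p₀ ∈ Set.Ioo (0 : ℝ) (1 / β), ∀ p ∈ Set.Ioo (0 : ℝ) p₀,
      Integrable (fun t : ℝ => |1 - |t| ^ (-β)| ^ p - 1) ∧
      ∫ t : ℝ, (|1 - |t| ^ (-β)| ^ p - 1) < 0 := by
  obtain ⟨hβ1, hβ2⟩ := hβ
  have hβpos : (0:ℝ) < β := by linarith
  have hβ0 : β ≠ 0 := by linarith
  set a : ℝ := (2*β)⁻¹ with ha_def
  have ha_pos : 0 < a := by positivity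
  have ha_lt : a < 1/β := by
    rw [one_div]
    exact inv_strictAnti₀ hβpos (by linarith)
  set L := fun t : ℝ => Real.log (abs (1 - (abs t) ^ (-β))) with hLd
  set G := fun t : ℝ => (Real.log (abs (1 - (abs t) ^ (-β))))^2 *
      (2 + (abs (1 - (abs t) ^ (-β))) ^ (2*β)⁻¹) with hGd
  have hL := logY_int hβ1 hβ2.le
  have hG := G_int hβ1 hβ2.le
  set I := ∫ t : ℝ, L t with hId
  set M := ∫ t : ℝ, G t with hMd
  have hI : I < 0 := I_neg hβ1 hβ2
  have hM0 : 0 ≤ M := by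
    refine integral_nonneg (fun t => ?_)
    have := Real.rpow_nonneg (abs_nonneg (1 - (abs t) ^ (-β))) (2*β)⁻¹
    exact mul_nonneg (sq_nonneg _) (by linarith)
  set p₀ : ℝ := min a (-I / (2*(M+1))) with hp₀d
  have hp₀pos : 0 < p₀ := lt_min ha_pos (div_pos (by linarith) (by linarith))
  have hp₀lt : p₀ < 1/β := lt_of_le_of_lt (min_le_left _ _) ha_lt
  have hp₀key : p₀ * (M+1) ≤ -I/2 := by
    have h1 : p₀ ≤ -I / (2*(M+1)) := min_le_right _ _
    have h2 : (0:ℝ) < M + 1 := by linarith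
    have h3 := mul_le_mul_of_nonneg_right h1 h2.le
    have h4 : (-I / (2*(M+1))) * (M+1) = -I/2 := by field_simp
    linarith
  refine ⟨p₀, ⟨hp₀pos, hp₀lt⟩, fun p hp => ?_⟩
  obtain ⟨hp0, hpp⟩ := hp
  have hpa : p ≤ a := le_trans hpp.le (min_le_left _ _)
  -- a.e. bounds
  have hN : ∀ᵐ t : ℝ, t ∉ ({0,1,-1} : Set ℝ) := by
    have hfin : ({0,1,-1} : Set ℝ).Finite :=
      (Set.finite_singleton _).insert _ |>.insert _
    exact measure_eq_zero_iff_ae_notMem.mp (hfin.measure_zero _)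
  have key : ∀ t : ℝ, t ∉ ({0,1,-1} : Set ℝ) →
      p * L t ≤ abs (1 - (abs t) ^ (-β)) ^ p - 1 ∧
      abs (1 - (abs t) ^ (-β)) ^ p - 1 ≤ p * L t + p^2 * G t := by
    intro t ht
    have hY : 0 < abs (1 - (abs t) ^ (-β)) := Ypos hβpos ht
    set Y := abs (1 - (abs t) ^ (-β)) with hYd
    have hrw : Y ^ p = Real.exp (Real.log Y * p) := Real.rpow_def_of_pos hY p
    constructor
    · have h1 := Real.add_one_le_exp (Real.log Y * p)
      rw [← hrw] at h1
      have : L t = Real.log Y := rfl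
      rw [this]; nlinarith
    · have h1 := exp_le_quad (Real.log Y * p)
      rw [← hrw] at h1
      have hYp : Y ^ p ≤ 1 + Y ^ a := by
        rcases le_or_gt Y 1 with h | h
        · have h2 : Y ^ p ≤ 1 := Real.rpow_le_one hY.le h hp0.le
          have h3 : (0:ℝ) ≤ Y ^ a := Real.rpow_nonneg hY.le _
          linarith
        · have h2 : Y ^ p ≤ Y ^ a := Real.rpow_le_rpow_of_exponent_le h.le hpa
          have h3 : (1:ℝ) ≤ Y ^ a := Real.one_le_rpow h.le ha_pos.le
          linarith
      have hLt : L t = Real.log Y := rfl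
      have hGt : G t = (Real.log Y)^2 * (2 + Y ^ a) := rfl
      rw [hLt, hGt]
      nlinarith [sq_nonneg (Real.log Y * p), sq_nonneg (Real.log Y), sq_nonneg p]
  -- integrability
  have hmfp : AEStronglyMeasurable (fun t : ℝ => |1 - |t| ^ (-β)| ^ p - 1) volume := by
    exact ((meas_rpow_comp (measY hβ0) (fun _ => abs_nonneg _) (ne_of_gt hp0)).sub
      measurable_const).aestronglyMeasurable
  have hdom : Integrable (fun t : ℝ => p * |L t| + p^2 * G t) :=
    ((hL.abs.const_mul p)).add (hG.const_mul (p^2))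
  have hGnn : ∀ t, 0 ≤ G t := by
    intro t
    have := Real.rpow_nonneg (abs_nonneg (1 - (abs t) ^ (-β))) (2*β)⁻¹
    exact mul_nonneg (sq_nonneg _) (by linarith)
  have hint : Integrable (fun t : ℝ => |1 - |t| ^ (-β)| ^ p - 1) := by
    refine hdom.mono' hmfp ?_
    filter_upwards [hN] with t ht
    obtain ⟨hlow, hup⟩ := key t ht
    rw [Real.norm_eq_abs, abs_le]
    constructor
    · have h1 : -(p * |L t|) ≤ p * L t := by
        have := neg_abs_le (L t)
        nlinarith
      have h2 : (0:ℝ) ≤ p^2 * G t := mul_nonneg (sq_nonneg p) (hGnn t)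
      nlinarith
    · have h1 : p * L t ≤ p * |L t| := by
        have := le_abs_self (L t)
        nlinarith
      nlinarith
  refine ⟨hint, ?_⟩
  -- integral bound
  have hrhs : Integrable (fun t : ℝ => p * L t + p^2 * G t) :=
    (hL.const_mul p).add (hG.const_mul (p^2))
  have hmono : ∫ t : ℝ, (|1 - |t| ^ (-β)| ^ p - 1) ≤ ∫ t : ℝ, (p * L t + p^2 * G t) := by
    refine integral_mono_ae hint hrhs ?_
    filter_upwards [hN] with t ht
    exact (key t ht).2
  have hval : ∫ t : ℝ, (p * L t + p^2 * G t) = p * I + p^2 * M := by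
    rw [integral_add (hL.const_mul p) (hG.const_mul (p^2)),
      integral_const_mul, integral_const_mul]
  rw [hval] at hmono
  have hfinal : p * I + p^2 * M < 0 := by
    have e1 : p * M ≤ p₀ * M := mul_le_mul_of_nonneg_right hpp.le hM0
    have e2 : p₀ * M ≤ p₀ * (M+1) := by nlinarith
    have e4 : p * (p * M) ≤ p * (-I/2) :=
      mul_le_mul_of_nonneg_left (le_trans e1 (le_trans e2 hp₀key)) hp0.le
    have e3 : p^2 * M = p * (p * M) := by ring
    have e6 : p * (-I/2) = -(p*I)/2 := by ring
    have e5 : p * I < 0 := mul_neg_of_pos_of_neg hp0 hI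
    linarith
  linarith
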